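/- For all pairs w ≤ y in W^J there exist unique elements Q^{J,a}_{w,y} ∈ R such that for all w, z ∈ W^J with w ≤ z one has Σ_{y ∈ W^J, w ≤ y ≤ z} (−1)^{ℓ(y)−ℓ(w)} Q^{J,a}_{w,y} P^{J,a}_{y,z} = δ_{w,z}. Moreover each Q^{J,a}_{w,y} lies in ℤ[q], Q^{J,a}_{w,w} = 1, and deg Q^{J,a}_{w,y} ≤ (ℓ(y)−ℓ(w)−1)/2 whenever w < y. -/

import Mathlib

namespace KLPaper

open Polynomial
open scoped Classical

variable {B : Type*} {W : Type*} [Group W] {M : CoxeterMatrix B}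

/-- The Bruhat order on a Coxeter group: generated by right multiplication by
reflections which increases the length. -/
def bruhatLE (cs : CoxeterSystem M W) : W → W → Prop :=
  Relation.ReflTransGen (fun x y =>
    (∃ t, cs.IsReflection t ∧ y = x * t) ∧ cs.length x < cs.length y)

/-- A commutative ring `R` containing `ℤ[q,q⁻¹]`, with a direct sum decomposition
`R = ⊕_{k ∈ ℤ} R_k` into additive subgroups and an involutive ring endomorphism `conj`
such that `R_i R_j ⊆ R_{i+j}`, `conj R_i = R_{-i}`, `1 ∈ R_0`, `q ∈ R_2`, `conj q = q⁻¹`. -/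
structure KLRing (R : Type*) [CommRing R] where
  q : R
  qinv : R
  q_qinv : q * qinv = 1
  grade : ℤ → AddSubgroup R
  decomp : DirectSum.IsInternal grade
  conj : R →+* R
  conj_conj : ∀ r : R, conj (conj r) = r
  grade_mul : ∀ (i j : ℤ) (r s : R), r ∈ grade i → s ∈ grade j → r * s ∈ grade (i + j)
  conj_grade : ∀ (i : ℤ) (r : R), r ∈ grade i → conj r ∈ grade (-i)
  one_mem : (1 : R) ∈ grade 0
  q_mem : q ∈ grade 2
  conj_q : conj q = qinv
  laurent_inj : Function.Injective fun f : ℤ →₀ ℤ =>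
    f.sum fun k c => c • (if 0 ≤ k then q ^ k.toNat else qinv ^ (-k).toNat)

variable {R : Type*} [CommRing R]

/-- The subgroup `R_0 + R_1 + ⋯ + R_{n-1} = ⊕_{i=0}^{n-1} R_i` of `R`. -/
def KLRing.gradeSum (K : KLRing R) (n : ℕ) : AddSubgroup R :=
  ⨆ i ∈ Finset.range n, K.grade (i : ℤ)

/-- `r` belongs to `ℤ[q] ⊆ R`. -/
def KLRing.InZq (K : KLRing R) (r : R) : Prop :=
  ∃ p : Polynomial ℤ, Polynomial.aeval K.q p = r

/-- The Hecke algebra of `(W, S)` over `R`: the free `R`-module with basis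
`{T_w}_{w ∈ W}`, with multiplication determined by `T_{w₁} T_{w₂} = T_{w₁ w₂}`
whenever `ℓ(w₁w₂) = ℓ(w₁) + ℓ(w₂)` and `(T_s + 1)(T_s - q) = 0` for `s ∈ S`. -/
structure Hecke (cs : CoxeterSystem M W) (R : Type*) [CommRing R] (q : R) where
  carrier : Type*
  [ring : Ring carrier]
  [alg : Algebra R carrier]
  T : W → carrier
  basis : Module.Basis W R carrier
  basis_eq : ∀ w : W, basis w = T w
  T_mul : ∀ w₁ w₂ : W, cs.length (w₁ * w₂) = cs.length w₁ + cs.length w₂ →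
    T w₁ * T w₂ = T (w₁ * w₂)
  T_quad : ∀ i : B, (T (cs.simple i) + 1) * (T (cs.simple i) - algebraMap R carrier q) = 0

attribute [instance] Hecke.ring Hecke.alg

variable {cs : CoxeterSystem M W}

/-- `bar` is the bar involution `Σ r_w T_w ↦ Σ conj(r_w) (T_{w⁻¹})⁻¹` of the Hecke algebra. -/
def IsBar (K : KLRing R) (Hk : Hecke cs R K.q) (bar : Hk.carrier →+* Hk.carrier) : Prop :=
  ∀ (r : R) (w : W), bar (r • Hk.T w) = K.conj r • Ring.inverse (Hk.T w⁻¹)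

/-- `j` is the involution `j(Σ r_w T_w) = Σ r_w (-q)^{ℓ(w)} (T_{w⁻¹})⁻¹` of the Hecke algebra. -/
def IsJ (K : KLRing R) (Hk : Hecke cs R K.q) (j : Hk.carrier →ₐ[R] Hk.carrier) : Prop :=
  ∀ w : W, j (Hk.T w) = (-K.q) ^ cs.length w • Ring.inverse (Hk.T w⁻¹)

/-- `C` is the Kazhdan–Lusztig basis element `C_w`:
`C = Σ_{y ≤ w} P_{y,w} T_y` with `P_{w,w} = 1`,
`P_{y,w} ∈ ⊕_{i=0}^{ℓ(w)-ℓ(y)-1} R_i` for `y < w`, and `bar C = q^{-ℓ(w)} C`.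
(The coefficient `P_{y,w}` of `C_w` is `Hk.basis.repr C y`.) -/
def IsKLElt (K : KLRing R) (Hk : Hecke cs R K.q)
    (bar : Hk.carrier →+* Hk.carrier) (w : W) (C : Hk.carrier) : Prop :=
  Hk.basis.repr C w = 1 ∧
  (∀ y : W, Hk.basis.repr C y ≠ 0 → bruhatLE cs y w) ∧
  (∀ y : W, bruhatLE cs y w → y ≠ w →
    Hk.basis.repr C y ∈ K.gradeSum (cs.length w - cs.length y)) ∧
  bar C = K.qinv ^ cs.length w • C

/-- The standard parabolic subgroup `W_J = ⟨J⟩`. -/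
def WJ (cs : CoxeterSystem M W) (J : Set B) : Subgroup W :=
  Subgroup.closure (cs.simple '' J)

/-- `W^J`: the set of minimal length coset representatives of `W/W_J`,
i.e. the `w ∈ W` with `ws > w` for all `s ∈ J`. -/
def minReps (cs : CoxeterSystem M W) (J : Set B) : Set W :=
  {w | ∀ i ∈ J, cs.length w < cs.length (w * cs.simple i)}

/-- The Hecke algebra `H(W_J)` of the standard parabolic subgroup `W_J`
(with generating set `J`; the length function of `(W_J, J)` is the restriction
of that of `(W, S)`). -/
structure HeckeJ (cs : CoxeterSystem M W) (J : Set B) (R : Type*) [CommRing R] (q : R) where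
  carrier : Type*
  [ring : Ring carrier]
  [alg : Algebra R carrier]
  T : WJ cs J → carrier
  basis : Module.Basis (WJ cs J) R carrier
  basis_eq : ∀ x, basis x = T x
  T_mul : ∀ x₁ x₂ : WJ cs J,
    cs.length ((x₁ : W) * (x₂ : W)) = cs.length (x₁ : W) + cs.length (x₂ : W) →
    T x₁ * T x₂ = T (x₁ * x₂)
  T_quad : ∀ (i : B) (hi : i ∈ J),
    (T ⟨cs.simple i, Subgroup.subset_closure ⟨i, hi, rfl⟩⟩ + 1) *
      (T ⟨cs.simple i, Subgroup.subset_closure ⟨i, hi, rfl⟩⟩ - algebraMap R carrier q) = 0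

attribute [instance] HeckeJ.ring HeckeJ.alg

/-- `(Mod, φ)` is (a realization of) the induced module `H^{J,a} = H ⊗_{H(W_J)} R^a`
together with `φ = φ^{J,a} : h ↦ h ⊗ 1^a`:  `φ` is surjective and its kernel is
the `R`-span of the elements `h (T_s - a)`, `s ∈ J`, which is exactly the kernel of
`h ↦ h ⊗ 1^a`. -/
def IsInduced {q : R} (Hk : Hecke cs R q) (J : Set B) (a : R)
    (Mod : Type*) [AddCommGroup Mod] [Module R Mod] (φ : Hk.carrier →ₗ[R] Mod) : Prop :=
  Function.Surjective φ ∧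
  LinearMap.ker φ = Submodule.span R
    {h : Hk.carrier | ∃ (g : Hk.carrier) (i : B), i ∈ J ∧
      h = g * (Hk.T (cs.simple i) - algebraMap R Hk.carrier a)}

/-- `C` is the parabolic Kazhdan–Lusztig basis element `C_w^{J,a}` of `H^{J,a}`:
`C = Σ_{y ∈ W^J, y ≤ w} P^{J,a}_{y,w} T_y^{J,a}` with `P^{J,a}_{w,w} = 1`,
`P^{J,a}_{y,w} ∈ ⊕_{i=0}^{ℓ(w)-ℓ(y)-1} R_i` for `y < w`, and `barJ C = q^{-ℓ(w)} C`,
where `b` is the basis `(T_y^{J,a})_{y ∈ W^J}` of `H^{J,a}` and `barJ` its bar involution.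
(The coefficient `P^{J,a}_{y,w}` of `C_w^{J,a}` is `b.repr C y`.) -/
def IsKLEltJ (K : KLRing R) {J : Set B} {Mod : Type*} [AddCommGroup Mod] [Module R Mod]
    (b : Module.Basis (minReps cs J) R Mod) (barJ : Mod →+ Mod)
    (w : minReps cs J) (C : Mod) : Prop :=
  b.repr C w = 1 ∧
  (∀ y : minReps cs J, b.repr C y ≠ 0 → bruhatLE cs y.1 w.1) ∧
  (∀ y : minReps cs J, bruhatLE cs y.1 w.1 → y ≠ w →
    b.repr C y ∈ K.gradeSum (cs.length w.1 - cs.length y.1)) ∧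
  barJ C = K.qinv ^ cs.length w.1 • C

/-! ### Auxiliary lemmas -/

section BruhatAux

variable {cs : CoxeterSystem M W}

lemma bruhat_refl (cs : CoxeterSystem M W) (x : W) : bruhatLE cs x x :=
  Relation.ReflTransGen.refl

lemma bruhat_eq_or_lt {x y : W} (h : bruhatLE cs x y) :
    x = y ∨ cs.length x < cs.length y := by
  induction h with
  | refl => exact Or.inl rfl
  | tail h₁ h₂ ih =>
    right
    rcases ih with rfl | hl
    · exact h₂.2
    · exact hl.trans h₂.2

lemma bruhat_length_le {x y : W} (h : bruhatLE cs x y) : cs.length x ≤ cs.length y := by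
  rcases bruhat_eq_or_lt h with rfl | h; exacts [le_rfl, h.le]

lemma bruhat_antisymm {x y : W} (h₁ : bruhatLE cs x y) (h₂ : bruhatLE cs y x) : x = y := by
  rcases bruhat_eq_or_lt h₁ with rfl | hl
  · rfl
  · have := bruhat_length_le h₂; omega

end BruhatAux

section KLRingAux

variable (K : KLRing R)

/-- Laurent monomials `q^k`. -/
noncomputable def KLRing.Qpow (k : ℤ) : R := if 0 ≤ k then K.q ^ k.toNat else K.qinv ^ (-k).toNat

lemma KLRing.qinv_mul_q : K.qinv * K.q = 1 := by rw [mul_comm]; exact K.q_qinv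

lemma KLRing.conj_qinv : K.conj K.qinv = K.q := by rw [← K.conj_q, K.conj_conj]

lemma KLRing.Qpow_natCast (n : ℕ) : K.Qpow n = K.q ^ n := by
  simp [KLRing.Qpow]

lemma KLRing.Qpow_eq (k : ℤ) : K.Qpow k = K.q ^ k.toNat * K.qinv ^ (-k).toNat := by
  unfold KLRing.Qpow
  split_ifs with h
  · have : (-k).toNat = 0 := by omega
    rw [this, pow_zero, mul_one]
  · have : k.toNat = 0 := by omega
    rw [this, pow_zero, one_mul]

lemma KLRing.pow_mul_qinv_pow (a b : ℕ) : K.q ^ a * K.qinv ^ b = K.Qpow ((a : ℤ) - b) := by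
  rcases le_total b a with h | h
  · obtain ⟨c, rfl⟩ := Nat.exists_eq_add_of_le h
    have : ((b + c : ℕ) : ℤ) - b = (c : ℤ) := by omega
    rw [this, pow_add, mul_comm (K.q ^ b), mul_assoc, ← mul_pow, K.q_qinv, one_pow, mul_one]
    exact (K.Qpow_natCast c).symm
  · obtain ⟨c, rfl⟩ := Nat.exists_eq_add_of_le h
    have h2 : ((a : ℤ)) - (a + c : ℕ) = -(c : ℤ) := by omega
    rw [h2, pow_add, ← mul_assoc, ← mul_pow, K.q_qinv, one_pow, one_mul]
    unfold KLRing.Qpow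
    split_ifs with h3
    · have : c = 0 := by omega
      simp [this]
    · have : (-(-(c:ℤ))).toNat = c := by omega
      rw [this]

lemma KLRing.Qpow_mul (j k : ℤ) : K.Qpow j * K.Qpow k = K.Qpow (j + k) := by
  rw [K.Qpow_eq j, K.Qpow_eq k]
  have h1 : K.q ^ j.toNat * K.qinv ^ (-j).toNat * (K.q ^ k.toNat * K.qinv ^ (-k).toNat)
      = K.q ^ (j.toNat + k.toNat) * K.qinv ^ ((-j).toNat + (-k).toNat) := by
    rw [pow_add, pow_add]; ring
  rw [h1, K.pow_mul_qinv_pow]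
  congr 1
  omega

lemma KLRing.q_pow_mem (n : ℕ) : K.q ^ n ∈ K.grade (2 * n) := by
  induction n with
  | zero => simpa using K.one_mem
  | succ n ih =>
    have := K.grade_mul 2 (2 * n) K.q (K.q ^ n) K.q_mem ih
    rw [← pow_succ'] at this
    convert this using 2
    push_cast; ring

lemma KLRing.qinv_mem : K.qinv ∈ K.grade (-2) := by
  have := K.conj_grade 2 K.q K.q_mem
  rwa [K.conj_q] at this

lemma KLRing.qinv_pow_mem (n : ℕ) : K.qinv ^ n ∈ K.grade (-(2 * n)) := by
  induction n with
  | zero => simpa using K.one_mem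
  | succ n ih =>
    have := K.grade_mul (-2) (-(2 * n)) K.qinv (K.qinv ^ n) K.qinv_mem ih
    rw [← pow_succ'] at this
    convert this using 2
    push_cast; ring

lemma KLRing.Qpow_mem (k : ℤ) : K.Qpow k ∈ K.grade (2 * k) := by
  rw [K.Qpow_eq]
  have := K.grade_mul _ _ _ _ (K.q_pow_mem k.toNat) (K.qinv_pow_mem (-k).toNat)
  convert this using 2
  omega

lemma KLRing.conj_Qpow (k : ℤ) : K.conj (K.Qpow k) = K.Qpow (-k) := by
  rw [K.Qpow_eq, K.Qpow_eq (-k), map_mul, map_pow, map_pow, K.conj_q, K.conj_qinv, neg_neg,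
    mul_comm]

/-- The subring `ℤ[q, q⁻¹] ⊆ R` (as an additive subgroup). -/
noncomputable def KLRing.Lau : AddSubgroup R := AddSubgroup.closure (Set.range K.Qpow)

lemma KLRing.Qpow_mem_Lau (k : ℤ) : K.Qpow k ∈ K.Lau :=
  AddSubgroup.subset_closure ⟨k, rfl⟩

lemma KLRing.one_mem_Lau : (1 : R) ∈ K.Lau := by
  have := K.Qpow_mem_Lau 0
  rwa [show ((0:ℤ) = ((0:ℕ):ℤ)) by norm_num, K.Qpow_natCast, pow_zero] at this

lemma KLRing.q_mem_Lau : K.q ∈ K.Lau := by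
  have := K.Qpow_mem_Lau 1
  rwa [show ((1:ℤ) = ((1:ℕ):ℤ)) by norm_num, K.Qpow_natCast, pow_one] at this

lemma KLRing.qinv_mem_Lau : K.qinv ∈ K.Lau := by
  have := K.Qpow_mem_Lau (-1)
  have h : K.Qpow (-1) = K.qinv := by
    rw [K.Qpow_eq]
    simp
  rwa [h] at this

lemma KLRing.Lau_mul_mem {r s : R} (hr : r ∈ K.Lau) (hs : s ∈ K.Lau) : r * s ∈ K.Lau := by
  induction hr, hs using AddSubgroup.closure_induction₂ with
  | mem x y hx hy =>
    obtain ⟨j, rfl⟩ := hx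
    obtain ⟨k, rfl⟩ := hy
    rw [K.Qpow_mul]
    exact K.Qpow_mem_Lau _
  | zero_left x hx => rw [zero_mul]; exact zero_mem _
  | zero_right x hx => rw [mul_zero]; exact zero_mem _
  | add_left x y z hx hy hz h1 h2 => rw [add_mul]; exact add_mem h1 h2
  | add_right x y z hx hy hz h1 h2 => rw [mul_add]; exact add_mem h1 h2
  | neg_left x y hx hy h1 => rw [neg_mul]; exact neg_mem h1
  | neg_right x y hx hy h1 => rw [mul_neg]; exact neg_mem h1

lemma KLRing.Lau_pow_mem {r : R} (hr : r ∈ K.Lau) (n : ℕ) : r ^ n ∈ K.Lau := by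
  induction n with
  | zero => rw [pow_zero]; exact K.one_mem_Lau
  | succ n ih => rw [pow_succ]; exact K.Lau_mul_mem ih hr

lemma KLRing.conj_Lau_mem {r : R} (hr : r ∈ K.Lau) : K.conj r ∈ K.Lau := by
  induction hr using AddSubgroup.closure_induction with
  | mem x hx => obtain ⟨k, rfl⟩ := hx; rw [K.conj_Qpow]; exact K.Qpow_mem_Lau _
  | zero => rw [map_zero]; exact zero_mem _
  | add x y hx hy h1 h2 => rw [map_add]; exact add_mem h1 h2
  | neg x hx h1 => rw [map_neg]; exact neg_mem h1

lemma KLRing.aeval_mem_Lau (p : Polynomial ℤ) : Polynomial.aeval K.q p ∈ K.Lau := by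
  induction p using Polynomial.induction_on' with
  | add p q hp hq => rw [map_add]; exact add_mem hp hq
  | monomial n c =>
    rw [Polynomial.aeval_monomial]
    have h1 : algebraMap ℤ R c = c • (1 : R) := by
      simp [Algebra.algebraMap_eq_smul_one]
    rw [h1, smul_mul_assoc, one_mul]
    exact zsmul_mem (by rw [← K.Qpow_natCast]; exact K.Qpow_mem_Lau _) c

end KLRingAux

lemma KLRing.one_ne_zero' {R₀ : Type*} [CommRing R₀] (K : KLRing R₀) : (1 : R₀) ≠ 0 := by
  intro h
  have h2 := K.laurent_inj (a₁ := Finsupp.single 0 1) (a₂ := 0)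
  simp only [Finsupp.sum_single_index, zero_smul, Finsupp.sum_zero_index] at h2
  have h3 : (Finsupp.single (0:ℤ) (1:ℤ)) = 0 := by
    apply h2
    simp [h]
  exact one_ne_zero (Finsupp.single_eq_zero.mp h3)
section ProjAux

variable {R₀ : Type*} [CommRing R₀] (K : KLRing R₀)

/-- The decomposition equivalence coming from `K.decomp`. -/
noncomputable def KLRing.decEquiv : DirectSum ℤ (fun i => K.grade i) ≃+ R₀ :=
  AddEquiv.ofBijective (DirectSum.coeAddMonoidHom K.grade) K.decomp

/-- The degree-`d` component of `r`. -/
noncomputable def KLRing.proj (d : ℤ) (r : R₀) : R₀ := (K.decEquiv.symm r d : R₀)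

lemma KLRing.decEquiv_apply (x : DirectSum ℤ (fun i => K.grade i)) :
    K.decEquiv x = DirectSum.coeAddMonoidHom K.grade x := rfl

lemma KLRing.proj_add (d : ℤ) (r s : R₀) :
    K.proj d (r + s) = K.proj d r + K.proj d s := by
  unfold KLRing.proj
  rw [map_add, DirectSum.add_apply, AddSubgroup.coe_add]

lemma KLRing.proj_zero (d : ℤ) : K.proj d (0 : R₀) = 0 := by
  unfold KLRing.proj
  rw [map_zero, DirectSum.zero_apply, ZeroMemClass.coe_zero]

lemma KLRing.proj_neg (d : ℤ) (r : R₀) : K.proj d (-r) = -K.proj d r := by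
  unfold KLRing.proj
  rw [map_neg, DFinsupp.neg_apply, AddSubgroup.coe_neg]

lemma KLRing.proj_sub (d : ℤ) (r s : R₀) :
    K.proj d (r - s) = K.proj d r - K.proj d s := by
  rw [sub_eq_add_neg, K.proj_add, K.proj_neg, sub_eq_add_neg]

lemma KLRing.proj_of_mem {i : ℤ} {r : R₀} (h : r ∈ K.grade i) (d : ℤ) :
    K.proj d r = if d = i then r else 0 := by
  unfold KLRing.proj
  have h1 : K.decEquiv.symm r = DirectSum.of (fun i => K.grade i) i ⟨r, h⟩ := by
    apply K.decEquiv.injective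
    rw [AddEquiv.apply_symm_apply, K.decEquiv_apply, DirectSum.coeAddMonoidHom_of]
  rw [h1, DirectSum.of_apply]
  by_cases h2 : d = i
  · subst h2
    rw [dif_pos rfl, if_pos rfl]
  · rw [dif_neg (fun h3 => h2 h3.symm), if_neg h2]
    rfl

lemma KLRing.eq_sum_proj {r : R₀} {s : Finset ℤ} (h : ∀ d ∉ s, K.proj d r = 0) :
    ∑ d ∈ s, K.proj d r = r := by
  classical
  set F := K.decEquiv.symm r with hF
  have hr : r = DirectSum.coeAddMonoidHom K.grade F := by
    rw [← K.decEquiv_apply, hF, AddEquiv.apply_symm_apply]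
  have hsum : r = ∑ d ∈ DFinsupp.support F, (F d : R₀) := by
    conv_lhs => rw [hr, ← DirectSum.sum_support_of F]
    rw [map_sum]
    apply Finset.sum_congr rfl
    intro d _
    rw [DirectSum.coeAddMonoidHom_of]
  have hsupp : DFinsupp.support F ⊆ s := by
    intro d hd
    by_contra hds
    have := h d hds
    unfold KLRing.proj at this
    rw [← hF] at this
    rw [DFinsupp.mem_support_iff] at hd
    exact hd (Subtype.ext this)
  have hFd : ∀ d, ((F d : K.grade d) : R₀) = K.proj d r := fun d => rfl
  conv_rhs => rw [hsum]
  simp only [hFd]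
  refine (Finset.sum_subset hsupp ?_).symm
  intro d _ hd
  rw [DFinsupp.notMem_support_iff] at hd
  rw [← hFd d, hd]
  rfl

lemma KLRing.proj_mem_grade (d : ℤ) (r : R₀) : K.proj d r ∈ K.grade d :=
  (K.decEquiv.symm r d).2

lemma KLRing.graded_induction (P : R₀ → Prop) (h0 : P 0)
    (hadd : ∀ a b : R₀, P a → P b → P (a + b))
    (hg : ∀ (i : ℤ) (r : R₀), r ∈ K.grade i → P r) (r : R₀) : P r := by
  classical
  have := K.eq_sum_proj (r := r) (s := DFinsupp.support (K.decEquiv.symm r)) ?_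
  · rw [← this]
    apply Finset.sum_induction _ P hadd h0
    intro d _
    exact hg d _ (K.proj_mem_grade d r)
  · intro d hd
    rw [DFinsupp.notMem_support_iff] at hd
    show ((K.decEquiv.symm r d : K.grade d) : R₀) = 0
    rw [hd]; rfl

lemma KLRing.proj_mul_left {u : R₀} {j : ℤ} (hu : u ∈ K.grade j) (d : ℤ) (r : R₀) :
    K.proj d (u * r) = u * K.proj (d - j) r := by
  induction r using K.graded_induction with
  | h0 => rw [mul_zero, K.proj_zero, K.proj_zero, mul_zero]
  | hadd a b h1 h2 => rw [mul_add, K.proj_add, K.proj_add, mul_add, h1, h2]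
  | hg i r hr =>
    have h1 : u * r ∈ K.grade (j + i) := K.grade_mul j i u r hu hr
    rw [K.proj_of_mem h1, K.proj_of_mem hr]
    by_cases h2 : d = j + i
    · rw [if_pos h2, if_pos (by omega)]
    · rw [if_neg h2, if_neg (by omega), mul_zero]

lemma KLRing.proj_conj (d : ℤ) (r : R₀) :
    K.proj d (K.conj r) = K.conj (K.proj (-d) r) := by
  induction r using K.graded_induction with
  | h0 => rw [map_zero, K.proj_zero, K.proj_zero, map_zero]
  | hadd a b h1 h2 => rw [map_add, K.proj_add, K.proj_add, map_add, h1, h2]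
  | hg i r hr =>
    have h1 : K.conj r ∈ K.grade (-i) := K.conj_grade i r hr
    rw [K.proj_of_mem h1, K.proj_of_mem hr]
    by_cases h2 : d = -i
    · rw [if_pos h2, if_pos (by omega)]
    · rw [if_neg h2, if_neg (by omega), map_zero]

lemma KLRing.proj_Lau {r : R₀} (hr : r ∈ K.Lau) :
    (∀ k : ℤ, ∃ c : ℤ, K.proj (2 * k) r = c • K.Qpow k) ∧
      (∀ d : ℤ, ¬(2 ∣ d) → K.proj d r = 0) := by
  induction hr using AddSubgroup.closure_induction with
  | mem x hx =>
    obtain ⟨k0, rfl⟩ := hx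
    constructor
    · intro k
      rw [K.proj_of_mem (K.Qpow_mem k0)]
      by_cases h : k = k0
      · exact ⟨1, by subst h; rw [if_pos rfl, one_smul]⟩
      · exact ⟨0, by rw [if_neg (by omega), zero_smul]⟩
    · intro d hd
      rw [K.proj_of_mem (K.Qpow_mem k0), if_neg (by omega)]
  | zero =>
    exact ⟨fun k => ⟨0, by rw [K.proj_zero, zero_smul]⟩, fun d _ => K.proj_zero d⟩
  | add x y hx hy h1 h2 =>
    constructor
    · intro k
      obtain ⟨c1, hc1⟩ := h1.1 k
      obtain ⟨c2, hc2⟩ := h2.1 k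
      exact ⟨c1 + c2, by rw [K.proj_add, hc1, hc2, add_smul]⟩
    · intro d hd
      rw [K.proj_add, h1.2 d hd, h2.2 d hd, add_zero]
  | neg x hx h1 =>
    constructor
    · intro k
      obtain ⟨c1, hc1⟩ := h1.1 k
      exact ⟨-c1, by rw [K.proj_neg, hc1, neg_smul]⟩
    · intro d hd
      rw [K.proj_neg, h1.2 d hd, neg_zero]

lemma KLRing.proj_gradeSum {r : R₀} {n : ℕ} (h : r ∈ K.gradeSum n) :
    ∀ d : ℤ, (d < 0 ∨ (n : ℤ) ≤ d) → K.proj d r = 0 := by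
  let S : AddSubgroup R₀ :=
    { carrier := {r | ∀ d : ℤ, (d < 0 ∨ (n : ℤ) ≤ d) → K.proj d r = 0}
      add_mem' := fun ha hb d hd => by rw [K.proj_add, ha d hd, hb d hd, add_zero]
      zero_mem' := fun d _ => K.proj_zero d
      neg_mem' := fun ha d hd => by rw [K.proj_neg, ha d hd, neg_zero] }
  have hle : K.gradeSum n ≤ S := by
    apply iSup_le
    intro i
    apply iSup_le
    intro hi
    rw [Finset.mem_range] at hi
    intro r hr d hd
    rw [K.proj_of_mem hr, if_neg (by omega)]
  exact hle h

end ProjAux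
section HeckeAux

variable {cs : CoxeterSystem M W} (K : KLRing R) (Hk : Hecke cs R K.q)

lemma hecke_T_one : Hk.T 1 = 1 := by
  have h : LinearMap.mulRight R (Hk.T 1) = (LinearMap.id : Hk.carrier →ₗ[R] Hk.carrier) := by
    apply Hk.basis.ext
    intro w
    rw [Hk.basis_eq w]
    show Hk.T w * Hk.T 1 = Hk.T w
    rw [Hk.T_mul w 1 (by rw [mul_one, CoxeterSystem.length_one, add_zero]), mul_one]
  have h1 := LinearMap.congr_fun h (1 : Hk.carrier)
  rw [LinearMap.mulRight_apply, LinearMap.id_apply, one_mul] at h1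
  exact h1

lemma hecke_T_sq (i : B) :
    Hk.T (cs.simple i) * Hk.T (cs.simple i)
      = (K.q - 1) • Hk.T (cs.simple i) + K.q • (1 : Hk.carrier) := by
  set t := Hk.T (cs.simple i) with ht
  set A := algebraMap R Hk.carrier K.q with hA
  have h := Hk.T_quad i
  rw [← ht, ← hA] at h
  have e1 : (t + 1) * (t - A) = t * t - t * A + t - A := by noncomm_ring
  rw [e1] at h
  have e3 : t * t = t * A - t + A := by
    rw [← sub_eq_zero, show t * t - (t * A - t + A) = t * t - t * A + t - A by noncomm_ring, h]
  have e2 : t * A = K.q • t := by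
    rw [hA, Algebra.algebraMap_eq_smul_one, mul_smul_comm, mul_one]
  rw [e3, e2, hA, Algebra.algebraMap_eq_smul_one, sub_smul, one_smul]

lemma hecke_T_simple_mul_inv (i : B) :
    Hk.T (cs.simple i) * (K.qinv • Hk.T (cs.simple i) + (K.qinv - 1) • (1 : Hk.carrier)) = 1 ∧
    (K.qinv • Hk.T (cs.simple i) + (K.qinv - 1) • (1 : Hk.carrier)) * Hk.T (cs.simple i) = 1 := by
  set t := Hk.T (cs.simple i) with ht
  constructor
  · rw [mul_add, mul_smul_comm, mul_smul_comm, mul_one, hecke_T_sq K Hk i, ← ht]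
    rw [show (1 : Hk.carrier) = (1 : R) • (1 : Hk.carrier) by rw [one_smul]]
    match_scalars
    · linear_combination K.q_qinv
    · linear_combination K.q_qinv
  · rw [add_mul, smul_mul_assoc, smul_mul_assoc, one_mul, hecke_T_sq K Hk i, ← ht]
    rw [show (1 : Hk.carrier) = (1 : R) • (1 : Hk.carrier) by rw [one_smul]]
    match_scalars
    · linear_combination K.q_qinv
    · linear_combination K.q_qinv

/-- The unit `T_s`. -/
noncomputable def heckeTUnit (i : B) : Hk.carrierˣ :=
  ⟨Hk.T (cs.simple i), K.qinv • Hk.T (cs.simple i) + (K.qinv - 1) • (1 : Hk.carrier),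
    (hecke_T_simple_mul_inv K Hk i).1, (hecke_T_simple_mul_inv K Hk i).2⟩

lemma hecke_isUnit_T_simple (i : B) : IsUnit (Hk.T (cs.simple i)) :=
  ⟨heckeTUnit K Hk i, rfl⟩

lemma hecke_inverse_T_simple (i : B) :
    Ring.inverse (Hk.T (cs.simple i))
      = K.qinv • Hk.T (cs.simple i) + (K.qinv - 1) • (1 : Hk.carrier) :=
  Ring.inverse_unit (heckeTUnit K Hk i)

lemma hecke_ringInverse_mul {x y : Hk.carrier} (hx : IsUnit x) (hy : IsUnit y) :
    Ring.inverse (x * y) = Ring.inverse y * Ring.inverse x := by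
  obtain ⟨ux, rfl⟩ := hx
  obtain ⟨uy, rfl⟩ := hy
  rw [← Units.val_mul, Ring.inverse_unit, Ring.inverse_unit, Ring.inverse_unit, mul_inv_rev,
    Units.val_mul]

/-- The additive subgroup of the Hecke algebra spanned by `r • T_x` with `r` Laurent and
`ℓ(x) < m`. -/
noncomputable def heckeLS (K : KLRing R) (Hk : Hecke cs R K.q) (m : ℕ) : AddSubgroup Hk.carrier :=
  AddSubgroup.closure
    {h | ∃ (r : R) (x : W), r ∈ K.Lau ∧ cs.length x < m ∧ h = r • Hk.T x}

lemma heckeLS_gen_mem {r : R} {x : W} {m : ℕ} (hr : r ∈ K.Lau) (hx : cs.length x < m) :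
    r • Hk.T x ∈ heckeLS K Hk m :=
  AddSubgroup.subset_closure ⟨r, x, hr, hx, rfl⟩

lemma heckeLS_mono {m m' : ℕ} (h : m ≤ m') : heckeLS K Hk m ≤ heckeLS K Hk m' := by
  apply AddSubgroup.closure_mono
  rintro _ ⟨r, x, hr, hx, rfl⟩
  exact ⟨r, x, hr, hx.trans_le h, rfl⟩

lemma heckeLS_T_mem {x : W} {m : ℕ} (hx : cs.length x < m) : Hk.T x ∈ heckeLS K Hk m := by
  have := heckeLS_gen_mem K Hk (K.one_mem_Lau) hx
  rwa [one_smul] at this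

lemma heckeLS_smul_mem {r : R} {h : Hk.carrier} {m : ℕ} (hr : r ∈ K.Lau)
    (hh : h ∈ heckeLS K Hk m) : r • h ∈ heckeLS K Hk m := by
  induction hh using AddSubgroup.closure_induction with
  | mem x hx =>
    obtain ⟨r', x', hr', hx', rfl⟩ := hx
    rw [smul_smul]
    exact heckeLS_gen_mem K Hk (K.Lau_mul_mem hr hr') hx'
  | zero => rw [smul_zero]; exact zero_mem _
  | add x y hx hy h1 h2 => rw [smul_add]; exact add_mem h1 h2
  | neg x hx h1 => rw [smul_neg]; exact neg_mem h1

lemma hecke_T_mul_T_simple (x : W) (i : B) :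
    Hk.T x * Hk.T (cs.simple i)
      = if cs.length (x * cs.simple i) = cs.length x + 1 then Hk.T (x * cs.simple i)
        else (K.q - 1) • Hk.T x + K.q • Hk.T (x * cs.simple i) := by
  rcases cs.length_mul_simple x i with h | h
  · rw [if_pos h]
    exact Hk.T_mul x (cs.simple i) (by rw [h, cs.length_simple])
  · have hne : cs.length (x * cs.simple i) ≠ cs.length x + 1 := by
      have := cs.length_mul_simple_ne x i
      omega
    rw [if_neg hne]
    set x' := x * cs.simple i with hx'
    have hxx : x = x' * cs.simple i := by
      rw [hx', mul_assoc, cs.simple_mul_simple_self, mul_one]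
    have hTx : Hk.T x = Hk.T x' * Hk.T (cs.simple i) := by
      rw [hxx]
      exact (Hk.T_mul x' (cs.simple i) (by rw [← hxx, cs.length_simple]; omega)).symm
    calc Hk.T x * Hk.T (cs.simple i)
        = Hk.T x' * (Hk.T (cs.simple i) * Hk.T (cs.simple i)) := by rw [hTx, mul_assoc]
      _ = (K.q - 1) • (Hk.T x' * Hk.T (cs.simple i)) + K.q • Hk.T x' := by
          rw [hecke_T_sq K Hk i, mul_add, mul_smul_comm, mul_smul_comm, mul_one]
      _ = (K.q - 1) • Hk.T x + K.q • Hk.T x' := by rw [← hTx]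

lemma heckeLS_mul_T_simple {h : Hk.carrier} {m : ℕ} (i : B) (hh : h ∈ heckeLS K Hk m) :
    h * Hk.T (cs.simple i) ∈ heckeLS K Hk (m + 1) := by
  induction hh using AddSubgroup.closure_induction with
  | mem g hg =>
    obtain ⟨r, x, hr, hx, rfl⟩ := hg
    rw [smul_mul_assoc, hecke_T_mul_T_simple K Hk x i]
    split_ifs with hlen
    · exact heckeLS_gen_mem K Hk hr (by omega)
    · have hlen2 : cs.length (x * cs.simple i) + 1 = cs.length x := by
        rcases cs.length_mul_simple x i with h | h
        · omega
        · omega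
      rw [smul_add, smul_smul, smul_smul]
      apply add_mem
      · exact heckeLS_gen_mem K Hk (K.Lau_mul_mem hr (sub_mem K.q_mem_Lau K.one_mem_Lau))
          (by omega)
      · exact heckeLS_gen_mem K Hk (K.Lau_mul_mem hr K.q_mem_Lau) (by omega)
  | zero => rw [zero_mul]; exact zero_mem _
  | add x y hx hy h1 h2 => rw [add_mul]; exact add_mem h1 h2
  | neg x hx h1 => rw [neg_mul]; exact neg_mem h1

lemma heckeLS_repr {h : Hk.carrier} {m : ℕ} (hh : h ∈ heckeLS K Hk m) (x : W) :
    Hk.basis.repr h x ∈ K.Lau ∧ (m ≤ cs.length x → Hk.basis.repr h x = 0) := by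
  induction hh using AddSubgroup.closure_induction with
  | mem g hg =>
    obtain ⟨r, x', hr, hx', rfl⟩ := hg
    rw [map_smul, ← Hk.basis_eq x', Hk.basis.repr_self, Finsupp.smul_apply,
      Finsupp.single_apply, smul_eq_mul]
    by_cases hxx : x' = x
    · rw [if_pos hxx, mul_one]
      exact ⟨hr, fun hm => by subst hxx; omega⟩
    · rw [if_neg hxx, mul_zero]
      exact ⟨zero_mem _, fun _ => rfl⟩
  | zero => rw [map_zero]; exact ⟨zero_mem _, fun _ => rfl⟩
  | add a c ha hc h1 h2 =>
    rw [map_add, Finsupp.add_apply]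
    exact ⟨add_mem h1.1 h2.1, fun hm => by rw [h1.2 hm, h2.2 hm, add_zero]⟩
  | neg a ha h1 =>
    rw [map_neg, Finsupp.neg_apply]
    exact ⟨neg_mem h1.1, fun hm => by rw [h1.2 hm, neg_zero]⟩

lemma hecke_inverse_T (y : W) :
    IsUnit (Hk.T y) ∧
      Ring.inverse (Hk.T y) - K.qinv ^ cs.length y • Hk.T y⁻¹ ∈ heckeLS K Hk (cs.length y) := by
  generalize hn : cs.length y = n
  induction n using Nat.strong_induction_on generalizing y with
  | _ n ih =>
    by_cases h1 : y = 1
    · subst h1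
      rw [hecke_T_one K Hk]
      constructor
      · exact isUnit_one
      · rw [Ring.inverse_one, inv_one, hecke_T_one K Hk, ← hn, cs.length_one, pow_zero, one_smul,
          sub_self]
        exact zero_mem _
    · obtain ⟨i, hdesc⟩ := cs.exists_leftDescent_of_ne_one h1
      rw [CoxeterSystem.isLeftDescent_iff] at hdesc
      set u := cs.simple i * y with hu
      have hyu : y = cs.simple i * u := by
        rw [hu, CoxeterSystem.simple_mul_simple_cancel_left]
      have hlu : cs.length u + 1 = n := by omega
      obtain ⟨hu_unit, hu_inv⟩ := ih (cs.length u) (by omega) u rfl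
      have hTy : Hk.T y = Hk.T (cs.simple i) * Hk.T u := by
        rw [hyu]
        exact (Hk.T_mul (cs.simple i) u (by rw [← hyu, cs.length_simple]; omega)).symm
      have hy_unit : IsUnit (Hk.T y) := by
        rw [hTy]
        exact (hecke_isUnit_T_simple K Hk i).mul hu_unit
      refine ⟨hy_unit, ?_⟩
      have hinv : Ring.inverse (Hk.T y)
          = Ring.inverse (Hk.T u) * Ring.inverse (Hk.T (cs.simple i)) := by
        rw [hTy]
        exact hecke_ringInverse_mul K Hk (hecke_isUnit_T_simple K Hk i) hu_unit
      set E := Ring.inverse (Hk.T u) - K.qinv ^ cs.length u • Hk.T u⁻¹ with hE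
      have hEu : Ring.inverse (Hk.T u) = K.qinv ^ cs.length u • Hk.T u⁻¹ + E := by
        rw [hE]; abel
      have hTs : Hk.T u⁻¹ * Hk.T (cs.simple i) = Hk.T y⁻¹ := by
        have hyi : y⁻¹ = u⁻¹ * cs.simple i := by
          rw [hyu, mul_inv_rev, cs.inv_simple]
        rw [hyi]
        apply Hk.T_mul u⁻¹ (cs.simple i)
        rw [← hyi, cs.length_inv, cs.length_simple, cs.length_inv]
        omega
      rw [hinv, hecke_inverse_T_simple K Hk i, hEu]
      have expand : (K.qinv ^ cs.length u • Hk.T u⁻¹ + E) *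
          (K.qinv • Hk.T (cs.simple i) + (K.qinv - 1) • (1 : Hk.carrier))
          = K.qinv ^ n • Hk.T y⁻¹
            + ((K.qinv ^ cs.length u * (K.qinv - 1)) • Hk.T u⁻¹
              + (K.qinv • (E * Hk.T (cs.simple i)) + (K.qinv - 1) • E)) := by
        simp only [add_mul, mul_add, smul_mul_assoc, mul_smul_comm, smul_smul, mul_one]
        rw [hTs]
        rw [← hlu]
        match_scalars <;> ring
      rw [expand, add_sub_cancel_left]
      apply add_mem
      · apply heckeLS_gen_mem K Hk
          (K.Lau_mul_mem (K.Lau_pow_mem K.qinv_mem_Lau _) (sub_mem K.qinv_mem_Lau K.one_mem_Lau))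
        rw [cs.length_inv]
        omega
      · apply add_mem
        · apply heckeLS_smul_mem K Hk K.qinv_mem_Lau
          have := heckeLS_mul_T_simple K Hk i hu_inv
          rw [hlu] at this
          exact this
        · apply heckeLS_smul_mem K Hk (sub_mem K.qinv_mem_Lau K.one_mem_Lau)
          exact heckeLS_mono K Hk (by omega) hu_inv

end HeckeAux

/-- existence and uniqueness of the inverse parabolic Kazhdan–Lusztig
polynomials `Q^{J,a}_{w,y}` (for `w ≤ y` in `W^J`), determined by
`Σ_{y ∈ W^J, w ≤ y ≤ z} (-1)^{ℓ(y)-ℓ(w)} Q^{J,a}_{w,y} P^{J,a}_{y,z} = δ_{w,z}`;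
moreover each `Q^{J,a}_{w,y} ∈ ℤ[q]`, `Q^{J,a}_{w,w} = 1`, and
`deg Q^{J,a}_{w,y} ≤ (ℓ(y)-ℓ(w)-1)/2` for `w < y`.  Here the parabolic
Kazhdan–Lusztig polynomial `P^{J,a}_{y,z}` is the coefficient `b.repr (CJ z) y`. -/
theorem statement14 (K : KLRing R) (J : Set B) (Hk : Hecke cs R K.q)
    (bar : Hk.carrier →+* Hk.carrier) (hbar : IsBar K Hk bar)
    (a : R) (ha : a = K.q ∨ a = -1)
    (Mod : Type*) [AddCommGroup Mod] [Module R Mod]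
    (φ : Hk.carrier →ₗ[R] Mod) (hInd : IsInduced Hk J a Mod φ)
    (b : Module.Basis (minReps cs J) R Mod) (hb : ∀ u : minReps cs J, b u = φ (Hk.T u.1))
    (barJ : Mod →+ Mod) (hbarJ : ∀ h : Hk.carrier, barJ (φ h) = φ (bar h))
    (CJ : minReps cs J → Mod) (hCJ : ∀ u : minReps cs J, IsKLEltJ K b barJ u (CJ u)) :
    ∃ QJ : minReps cs J → minReps cs J → R,
      (∀ w z : minReps cs J, bruhatLE cs w.1 z.1 →
        (∑ᶠ y ∈ {y : minReps cs J | bruhatLE cs w.1 y.1 ∧ bruhatLE cs y.1 z.1},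
          (-1 : R) ^ (cs.length y.1 - cs.length w.1) * QJ w y * b.repr (CJ z) y)
          = if w = z then 1 else 0) ∧
      (∀ w y : minReps cs J, bruhatLE cs w.1 y.1 → K.InZq (QJ w y)) ∧
      (∀ w : minReps cs J, QJ w w = 1) ∧
      (∀ w y : minReps cs J, bruhatLE cs w.1 y.1 → w ≠ y →
        ∃ p : Polynomial ℤ, Polynomial.aeval K.q p = QJ w y ∧
          2 * p.natDegree ≤ cs.length y.1 - cs.length w.1 - 1) ∧
      (∀ QJ' : minReps cs J → minReps cs J → R,
        (∀ w z : minReps cs J, bruhatLE cs w.1 z.1 →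
          (∑ᶠ y ∈ {y : minReps cs J | bruhatLE cs w.1 y.1 ∧ bruhatLE cs y.1 z.1},
            (-1 : R) ^ (cs.length y.1 - cs.length w.1) * QJ' w y * b.repr (CJ z) y)
            = if w = z then 1 else 0) →
        ∀ w y : minReps cs J, bruhatLE cs w.1 y.1 → QJ' w y = QJ w y) := by
  classical
  have hone : (1 : R) ≠ 0 := K.one_ne_zero'
  have haLau : ∀ m : ℕ, a ^ m ∈ K.Lau := by
    intro m
    apply K.Lau_pow_mem
    rcases ha with rfl | rfl
    · exact K.q_mem_Lau
    · exact neg_mem K.one_mem_Lau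
  -- Step 1: the image of `T x` in the module.
  have lemB : ∀ x : W, ∃ (u : minReps cs J) (m : ℕ),
      m + cs.length u.1 = cs.length x ∧ φ (Hk.T x) = a ^ m • b u := by
    intro x
    generalize hn : cs.length x = n
    induction n using Nat.strong_induction_on generalizing x with
    | _ n ih =>
      by_cases hx : x ∈ minReps cs J
      · exact ⟨⟨x, hx⟩, 0, by simpa using hn, by rw [pow_zero, one_smul, hb ⟨x, hx⟩]⟩
      · have hx2 : ∃ i ∈ J, ¬ cs.length x < cs.length (x * cs.simple i) := by
          simpa [minReps] using hx
        obtain ⟨i, hiJ, hdesc⟩ := hx2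
        have hlen : cs.length (x * cs.simple i) + 1 = cs.length x := by
          rcases cs.length_mul_simple x i with h | h
          · omega
          · exact h
        set x' := x * cs.simple i with hx'def
        have hxx : x = x' * cs.simple i := by
          rw [hx'def, mul_assoc, cs.simple_mul_simple_self, mul_one]
        obtain ⟨u, m, hm, hφ⟩ := ih (cs.length x') (by omega) x' rfl
        have hTx : Hk.T x = Hk.T x' * Hk.T (cs.simple i) := by
          rw [hxx]
          exact (Hk.T_mul x' (cs.simple i) (by rw [← hxx, cs.length_simple]; omega)).symm
        have hker : Hk.T x' * (Hk.T (cs.simple i) - algebraMap R Hk.carrier a)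
            ∈ LinearMap.ker φ := by
          rw [hInd.2]
          exact Submodule.subset_span ⟨Hk.T x', i, hiJ, rfl⟩
        have hφx : φ (Hk.T x) = a • φ (Hk.T x') := by
          have e : Hk.T x
              = Hk.T x' * (Hk.T (cs.simple i) - algebraMap R Hk.carrier a) + a • Hk.T x' := by
            rw [mul_sub, hTx]
            rw [show Hk.T x' * algebraMap R Hk.carrier a = a • Hk.T x' from by
              rw [← Algebra.commutes, ← Algebra.smul_def]]
            abel
          rw [e, map_add, LinearMap.mem_ker.mp hker, zero_add, map_smul]
        exact ⟨u, m + 1, by omega, by rw [hφx, hφ, smul_smul, ← pow_succ']⟩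
  -- Step 2: coefficients of images of elements of `heckeLS`.
  have hLSrepr : ∀ (m : ℕ) (h0 : Hk.carrier), h0 ∈ heckeLS K Hk m →
      ∀ u : minReps cs J, b.repr (φ h0) u ∈ K.Lau ∧
        (b.repr (φ h0) u ≠ 0 → cs.length u.1 < m) := by
    intro m h0 hh0
    induction hh0 using AddSubgroup.closure_induction with
    | mem g hg =>
      obtain ⟨r, x, hr, hx, rfl⟩ := hg
      obtain ⟨u0, k, hk, hφx⟩ := lemB x
      intro u
      have e : φ (r • Hk.T x) = (r * a ^ k) • b u0 := by rw [map_smul, hφx, smul_smul]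
      rw [e, map_smul, Finsupp.smul_apply, b.repr_self, Finsupp.single_apply, smul_eq_mul]
      by_cases huu : u0 = u
      · rw [if_pos huu, mul_one]
        exact ⟨K.Lau_mul_mem hr (haLau k), fun _ => by subst huu; omega⟩
      · rw [if_neg huu, mul_zero]
        exact ⟨zero_mem _, fun h => absurd rfl h⟩
    | zero =>
      intro u
      rw [map_zero, map_zero]
      exact ⟨zero_mem _, fun h => absurd rfl h⟩
    | add g1 g2 hg1 hg2 h1 h2 =>
      intro u
      rw [map_add, map_add, Finsupp.add_apply]
      refine ⟨add_mem (h1 u).1 (h2 u).1, fun h => ?_⟩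
      by_cases hz1 : b.repr (φ g1) u = 0
      · rw [hz1, zero_add] at h
        exact (h2 u).2 h
      · exact (h1 u).2 hz1
    | neg g hg h1 =>
      intro u
      rw [map_neg, map_neg, Finsupp.neg_apply, ne_eq, neg_eq_zero]
      exact ⟨neg_mem (h1 u).1, (h1 u).2⟩
  -- Step 3: the bar involution on the module basis.
  have lemC : ∀ y : minReps cs J, ∃ E : Mod,
      φ (Ring.inverse (Hk.T y.1⁻¹)) = K.qinv ^ cs.length y.1 • b y + E ∧
        (∀ u : minReps cs J, b.repr E u ∈ K.Lau) ∧
        (∀ u : minReps cs J, b.repr E u ≠ 0 → cs.length u.1 < cs.length y.1) := by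
    intro y
    obtain ⟨hyunit, hyE⟩ := hecke_inverse_T K Hk y.1⁻¹
    rw [cs.length_inv, inv_inv] at hyE
    set E0 := Ring.inverse (Hk.T y.1⁻¹) - K.qinv ^ cs.length y.1 • Hk.T y.1 with hE0
    have hsplit : Ring.inverse (Hk.T y.1⁻¹) = K.qinv ^ cs.length y.1 • Hk.T y.1 + E0 := by
      rw [hE0]; abel
    refine ⟨φ E0, ?_, fun u => (hLSrepr _ E0 hyE u).1, fun u => (hLSrepr _ E0 hyE u).2⟩
    rw [hsplit, map_add, map_smul, hb y]
  choose E hE1 hE2 hE3 using lemC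
  -- Step 4: the coordinate equation from bar-invariance.
  have hcoord : ∀ (w x : minReps cs J), x ∈ (b.repr (CJ w)).support →
      K.qinv ^ cs.length w.1 * b.repr (CJ w) x
        = K.conj (b.repr (CJ w) x) * K.qinv ^ cs.length x.1
          + ∑ y ∈ (b.repr (CJ w)).support, K.conj (b.repr (CJ w) y) * b.repr (E y) x := by
    intro w x hx
    have hsum : (∑ y ∈ (b.repr (CJ w)).support, b.repr (CJ w) y • b y) = CJ w := by
      conv_rhs => rw [← b.linearCombination_repr (CJ w)]
      rw [Finsupp.linearCombination_apply, Finsupp.sum]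
    have hbar1 : ∀ y : minReps cs J, barJ (b.repr (CJ w) y • b y)
        = K.conj (b.repr (CJ w) y) • (K.qinv ^ cs.length y.1 • b y + E y) := by
      intro y
      rw [hb y, ← map_smul, hbarJ, hbar, map_smul, hE1 y, hb y]
    have hbig : K.qinv ^ cs.length w.1 • CJ w
        = ∑ y ∈ (b.repr (CJ w)).support,
            K.conj (b.repr (CJ w) y) • (K.qinv ^ cs.length y.1 • b y + E y) := by
      rw [← (hCJ w).2.2.2]
      conv_lhs => rw [← hsum]
      rw [map_sum]
      exact Finset.sum_congr rfl fun y _ => hbar1 y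
    have happ := congrArg (fun v => b.repr v x) hbig
    simp only [map_smul, map_sum, map_add, Finsupp.smul_apply, Finsupp.add_apply,
      Finset.sum_apply', smul_eq_mul, b.repr_self, Finsupp.single_apply] at happ
    rw [happ]
    rw [Finset.sum_congr rfl (fun y (hy : y ∈ (b.repr (CJ w)).support) =>
      (mul_add (K.conj (b.repr (CJ w) y)) (K.qinv ^ cs.length y.1 * if y = x then 1 else 0)
        (b.repr (E y) x)))]
    rw [Finset.sum_add_distrib]
    congr 1
    rw [Finset.sum_eq_single x]
    · rw [if_pos rfl, mul_one]
    · intro y _ hyx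
      rw [if_neg hyx, mul_zero, mul_zero]
    · intro hxs
      exact absurd hx hxs
  -- Step 5: the parabolic KL polynomials lie in ℤ[q] with a degree bound.
  have lemD : ∀ (w x : minReps cs J), ∃ p : Polynomial ℤ,
      Polynomial.aeval K.q p = b.repr (CJ w) x ∧ (x = w → p = 1) ∧
      (x ≠ w → 2 * p.natDegree + 1 ≤ cs.length w.1 - cs.length x.1 ∨ p = 0) := by
    intro w
    have main : ∀ (k : ℕ) (x : minReps cs J), cs.length w.1 ≤ cs.length x.1 + k →
        ∃ p : Polynomial ℤ, Polynomial.aeval K.q p = b.repr (CJ w) x ∧ (x = w → p = 1) ∧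
          (x ≠ w → 2 * p.natDegree + 1 ≤ cs.length w.1 - cs.length x.1 ∨ p = 0) := by
      intro k
      induction k with
      | zero =>
        intro x hlen
        by_cases hxw : x = w
        · subst hxw
          exact ⟨1, by rw [map_one, (hCJ x).1], fun _ => rfl, fun h => absurd rfl h⟩
        · have hP0 : b.repr (CJ w) x = 0 := by
            by_contra hP
            rcases bruhat_eq_or_lt ((hCJ w).2.1 x hP) with h | h
            · exact hxw (Subtype.ext h)
            · omega
          exact ⟨0, by rw [map_zero, hP0], fun h => absurd h hxw, fun _ => Or.inr rfl⟩
      | succ k ih =>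
        intro x hlen
        by_cases hk : cs.length w.1 ≤ cs.length x.1 + k
        · exact ih x hk
        have hn : cs.length w.1 = cs.length x.1 + (k + 1) := by omega
        have hxw : x ≠ w := fun h => by rw [h] at hn; omega
        by_cases hP : b.repr (CJ w) x = 0
        · exact ⟨0, by rw [map_zero, hP], fun h => absurd h hxw, fun _ => Or.inr rfl⟩
        have hxsupp : x ∈ (b.repr (CJ w)).support := Finsupp.mem_support_iff.mpr hP
        have hbru : bruhatLE cs x.1 w.1 := (hCJ w).2.1 x hP
        have hgr : b.repr (CJ w) x ∈ K.gradeSum (k + 1) := by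
          have := (hCJ w).2.2.1 x hbru hxw
          rwa [show cs.length w.1 - cs.length x.1 = k + 1 from by omega] at this
        set Lel := ∑ y ∈ (b.repr (CJ w)).support,
          K.conj (b.repr (CJ w) y) * b.repr (E y) x with hLel
        have hLelLau : Lel ∈ K.Lau := by
          rw [hLel]
          apply sum_mem
          intro y hy
          by_cases he : b.repr (E y) x = 0
          · rw [he, mul_zero]; exact zero_mem _
          · have hxy : cs.length x.1 < cs.length y.1 := hE3 y x he
            obtain ⟨p, hp, _, _⟩ := ih y (by omega)
            rw [← hp]
            exact K.Lau_mul_mem (K.conj_Lau_mem (K.aeval_mem_Lau p)) (hE2 y x)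
        have heq := hcoord w x hxsupp
        rw [← hLel] at heq
        have hproj0 := K.proj_gradeSum hgr
        have hkey : ∀ i : ℕ, i < k + 1 →
            K.proj i (b.repr (CJ w) x)
              = K.q ^ cs.length w.1 * K.proj ((i : ℤ) - 2 * cs.length w.1) Lel := by
          intro i hi
          have h1 : K.proj ((i:ℤ) - 2 * cs.length w.1)
              (K.qinv ^ cs.length w.1 * b.repr (CJ w) x)
              = K.qinv ^ cs.length w.1 * K.proj i (b.repr (CJ w) x) := by
            rw [K.proj_mul_left (K.qinv_pow_mem (cs.length w.1))]
            congr 2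
            omega
          have h2 : K.proj ((i:ℤ) - 2 * cs.length w.1)
              (K.conj (b.repr (CJ w) x) * K.qinv ^ cs.length x.1) = 0 := by
            rw [mul_comm (K.conj (b.repr (CJ w) x)) (K.qinv ^ cs.length x.1),
              K.proj_mul_left (K.qinv_pow_mem (cs.length x.1)), K.proj_conj]
            rw [show -(((i:ℤ) - 2 * cs.length w.1) - -(2 * (cs.length x.1:ℤ)))
              = 2 * (k+1:ℤ) - i from by omega]
            rw [hproj0 _ (Or.inr (by push_cast; omega)), map_zero, mul_zero]
          have h3 := congrArg (K.proj ((i:ℤ) - 2 * cs.length w.1)) heq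
          rw [h1, K.proj_add, h2, zero_add] at h3
          have h4 := congrArg (fun t => K.q ^ cs.length w.1 * t) h3
          rwa [← mul_assoc, ← mul_pow, K.q_qinv, one_pow, one_mul] at h4
        have hodd : ∀ i : ℕ, i < k + 1 → ¬(2 ∣ i) → K.proj i (b.repr (CJ w) x) = 0 := by
          intro i hi h2i
          rw [hkey i hi, (K.proj_Lau hLelLau).2 _ (by omega), mul_zero]
        have heven : ∀ j : ℕ, ∃ c : ℤ,
            K.proj ((2*j : ℕ)) (b.repr (CJ w) x) = c • K.q ^ j := by
          intro j
          by_cases hj : 2*j < k + 1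
          · obtain ⟨c, hc⟩ := (K.proj_Lau hLelLau).1 ((j:ℤ) - cs.length w.1)
            refine ⟨c, ?_⟩
            rw [hkey (2*j) hj]
            rw [show (((2*j:ℕ)):ℤ) - 2*(cs.length w.1:ℤ)
              = 2 * ((j:ℤ) - cs.length w.1) from by push_cast; ring]
            rw [hc, zsmul_eq_mul, zsmul_eq_mul, ← mul_assoc,
              mul_comm (K.q ^ cs.length w.1) (c:R), mul_assoc]
            congr 1
            rw [← K.Qpow_natCast (cs.length w.1), K.Qpow_mul,
              show (cs.length w.1 : ℤ) + ((j:ℤ) - cs.length w.1) = ((j:ℕ):ℤ) from by push_cast; ring,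
              K.Qpow_natCast]
          · exact ⟨0, by rw [hproj0 _ (Or.inr (by push_cast; omega)), zero_smul]⟩
        choose c hc using heven
        have hPsum : b.repr (CJ w) x = ∑ j ∈ Finset.range ((k+2)/2), (c j) • K.q ^ j := by
          have h1 := K.eq_sum_proj (r := b.repr (CJ w) x)
            (s := (Finset.range (k+1)).map ⟨Nat.cast, Nat.cast_injective⟩) ?_
          · rw [Finset.sum_map] at h1
            simp only [Function.Embedding.coeFn_mk] at h1
            have hsplit : ∑ i ∈ Finset.range (k+1), K.proj (i:ℤ) (b.repr (CJ w) x)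
                = ∑ i ∈ (Finset.range (k+1)).filter (fun i => 2 ∣ i),
                    K.proj (i:ℤ) (b.repr (CJ w) x) := by
              refine (Finset.sum_filter_of_ne ?_).symm
              intro i hi hne
              by_contra h2
              exact hne (hodd i (Finset.mem_range.mp hi) h2)
            have himg : (Finset.range (k+1)).filter (fun i => 2 ∣ i)
                = (Finset.range ((k+2)/2)).image (fun j => 2*j) := by
              ext i
              simp only [Finset.mem_filter, Finset.mem_range, Finset.mem_image]
              constructor
              · rintro ⟨hin, j, rfl⟩
                exact ⟨j, by omega, rfl⟩
              · rintro ⟨j, hj, rfl⟩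
                exact ⟨by omega, ⟨j, rfl⟩⟩
            rw [hsplit, himg, Finset.sum_image (by intro p _ q _ h; simp only at h; omega)] at h1
            rw [← h1]
            apply Finset.sum_congr rfl
            intro j _
            exact hc j
          · intro d hd
            apply hproj0
            rcases lt_or_ge d 0 with h | h
            · exact Or.inl h
            right
            by_contra hlt
            push_neg at hlt
            apply hd
            rw [Finset.mem_map]
            exact ⟨d.toNat, Finset.mem_range.mpr (by omega), by simp; omega⟩
        refine ⟨∑ j ∈ Finset.range ((k+2)/2), Polynomial.C (c j) * Polynomial.X ^ j,
          ?_, fun h => absurd h hxw, ?_⟩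
        · rw [map_sum, hPsum]
          apply Finset.sum_congr rfl
          intro j _
          rw [map_mul, map_pow, Polynomial.aeval_C, Polynomial.aeval_X, zsmul_eq_mul]
          simp
        · intro _
          left
          have hdeg : (∑ j ∈ Finset.range ((k+2)/2),
              Polynomial.C (c j) * Polynomial.X ^ j).natDegree ≤ (k+2)/2 - 1 := by
            apply Polynomial.natDegree_sum_le_of_forall_le
            intro j hj
            refine (Polynomial.natDegree_C_mul_X_pow_le _ _).trans ?_
            have := Finset.mem_range.mp hj
            omega
          omega
    intro x
    exact main (cs.length w.1) x (by omega)
  -- Step 6: the recursive construction of Q.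
  set S : minReps cs J → minReps cs J → Finset (minReps cs J) := fun w z =>
    ((b.repr (CJ z)).support.erase z).filter (fun y => bruhatLE cs w.1 y.1) with hS
  have hSmem : ∀ w z y, y ∈ S w z ↔
      (y ≠ z ∧ b.repr (CJ z) y ≠ 0 ∧ bruhatLE cs w.1 y.1) := by
    intro w z y
    rw [hS]
    simp only [Finset.mem_filter, Finset.mem_erase, Finsupp.mem_support_iff]
    tauto
  have hSlt : ∀ w z y, y ∈ S w z → cs.length y.1 < cs.length z.1 := by
    intro w z y hy
    rw [hSmem] at hy
    rcases bruhat_eq_or_lt ((hCJ z).2.1 y hy.2.1) with h | h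
    · exact absurd (Subtype.ext h) hy.1
    · exact h
  have hSbru : ∀ w z y, y ∈ S w z → bruhatLE cs w.1 y.1 := fun w z y hy =>
    ((hSmem w z y).mp hy).2.2
  let G : ℕ → minReps cs J → minReps cs J → R := fun n =>
    Nat.rec (motive := fun _ => minReps cs J → minReps cs J → R)
      (fun w z => if w = z then 1 else 0)
      (fun n ih w z => if cs.length z.1 = n then
          (if w = z then 1 else
            (-1 : R) ^ (cs.length z.1 - cs.length w.1 + 1) *
              ∑ y ∈ S w z,
                (-1 : R) ^ (cs.length y.1 - cs.length w.1) * ih w y * b.repr (CJ z) y)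
        else ih w z) n
  set Q : minReps cs J → minReps cs J → R := fun w z => G (cs.length z.1 + 1) w z with hQ
  have hGsucc : ∀ n w z, G (n+1) w z = if cs.length z.1 = n then
      (if w = z then 1 else
        (-1 : R) ^ (cs.length z.1 - cs.length w.1 + 1) *
          ∑ y ∈ S w z, (-1 : R) ^ (cs.length y.1 - cs.length w.1) * G n w y * b.repr (CJ z) y)
    else G n w z := fun n w z => rfl
  have hstab : ∀ n w y, cs.length y.1 < n → G n w y = Q w y := by
    intro n
    induction n with
    | zero => intro w y h; exact absurd h (Nat.not_lt_zero _)
    | succ n ihn =>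
      intro w y hy
      by_cases h : cs.length y.1 = n
      · simp only [hQ]
        rw [h]
      · rw [hGsucc, if_neg h]
        exact ihn w y (by omega)
  have hQdef : ∀ w z, Q w z = if w = z then 1 else
      (-1 : R) ^ (cs.length z.1 - cs.length w.1 + 1) *
        ∑ y ∈ S w z, (-1 : R) ^ (cs.length y.1 - cs.length w.1) * Q w y * b.repr (CJ z) y := by
    intro w z
    have h0 : Q w z = G (cs.length z.1 + 1) w z := by simp only [hQ]
    rw [h0, hGsucc, if_pos rfl]
    by_cases hwz : w = z
    · rw [if_pos hwz, if_pos hwz]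
    · rw [if_neg hwz, if_neg hwz]
      congr 1
      apply Finset.sum_congr rfl
      intro y hy
      rw [hstab (cs.length z.1) w y (hSlt w z y hy)]
  have hQrefl : ∀ w, Q w w = 1 := by
    intro w
    rw [hQdef, if_pos rfl]
  -- Step 7: reduction of the finsum to a finite sum.
  have hred : ∀ (F : minReps cs J → minReps cs J → R) (w z : minReps cs J),
      bruhatLE cs w.1 z.1 →
      (∑ᶠ y ∈ {y : minReps cs J | bruhatLE cs w.1 y.1 ∧ bruhatLE cs y.1 z.1},
        (-1 : R) ^ (cs.length y.1 - cs.length w.1) * F w y * b.repr (CJ z) y)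
        = (-1 : R) ^ (cs.length z.1 - cs.length w.1) * F w z
          + ∑ y ∈ S w z,
              (-1 : R) ^ (cs.length y.1 - cs.length w.1) * F w y * b.repr (CJ z) y := by
    intro F w z hwz
    have hznotS : z ∉ S w z := by
      intro h
      exact ((hSmem w z z).mp h).1 rfl
    have hfin : (∑ᶠ y ∈ {y : minReps cs J | bruhatLE cs w.1 y.1 ∧ bruhatLE cs y.1 z.1},
        (-1 : R) ^ (cs.length y.1 - cs.length w.1) * F w y * b.repr (CJ z) y)
        = ∑ y ∈ insert z (S w z),
            (-1 : R) ^ (cs.length y.1 - cs.length w.1) * F w y * b.repr (CJ z) y := by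
      apply finsum_mem_eq_sum_of_inter_support_eq
      ext y
      simp only [Set.mem_inter_iff, Set.mem_setOf_eq, Function.mem_support, Finset.coe_insert,
        Set.mem_insert_iff, Finset.mem_coe]
      constructor
      · rintro ⟨⟨h1, h2⟩, h3⟩
        refine ⟨?_, h3⟩
        by_cases hyz : y = z
        · exact Or.inl hyz
        · refine Or.inr ((hSmem w z y).mpr ⟨hyz, ?_, h1⟩)
          intro h0
          exact h3 (by rw [h0, mul_zero])
      · rintro ⟨h1, h3⟩
        refine ⟨⟨?_, ?_⟩, h3⟩
        · rcases h1 with rfl | h1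
          · exact hwz
          · exact hSbru w z y h1
        · rcases h1 with rfl | h1
          · exact bruhat_refl cs y.1
          · apply (hCJ z).2.1
            intro h0
            exact h3 (by rw [h0, mul_zero])
    rw [hfin, Finset.sum_insert hznotS, (hCJ z).1, mul_one]
  -- Step 8: Q satisfies the defining identity.
  have hmain : ∀ w z : minReps cs J, bruhatLE cs w.1 z.1 →
      (∑ᶠ y ∈ {y : minReps cs J | bruhatLE cs w.1 y.1 ∧ bruhatLE cs y.1 z.1},
        (-1 : R) ^ (cs.length y.1 - cs.length w.1) * Q w y * b.repr (CJ z) y)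
        = if w = z then 1 else 0 := by
    intro w z hwz
    rw [hred Q w z hwz]
    by_cases hwzeq : w = z
    · subst hwzeq
      have hSempty : S w w = ∅ := by
        apply Finset.eq_empty_of_forall_notMem
        intro y hy
        have h1 := bruhat_length_le (hSbru w w y hy)
        have h2 := hSlt w w y hy
        omega
      rw [if_pos rfl, hSempty, Finset.sum_empty, add_zero, hQrefl, Nat.sub_self, pow_zero,
        mul_one]
    · rw [if_neg hwzeq, hQdef, if_neg hwzeq, ← mul_assoc]
      have hsgn : (-1:R) ^ (cs.length z.1 - cs.length w.1) *
          (-1:R) ^ (cs.length z.1 - cs.length w.1 + 1) = -1 := by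
        rw [← pow_add,
          show cs.length z.1 - cs.length w.1 + (cs.length z.1 - cs.length w.1 + 1)
            = 2 * (cs.length z.1 - cs.length w.1) + 1 from by ring,
          pow_succ, pow_mul, neg_one_sq, one_pow, one_mul]
      rw [hsgn, neg_one_mul, neg_add_cancel]
  -- Step 9: Q is a polynomial in q with the degree bound.
  have hQpoly : ∀ (n : ℕ) (y w : minReps cs J), cs.length y.1 ≤ n → bruhatLE cs w.1 y.1 →
      ∃ p : Polynomial ℤ, Polynomial.aeval K.q p = Q w y ∧ (w = y → p = 1) ∧
        (w ≠ y → 2 * p.natDegree ≤ cs.length y.1 - cs.length w.1 - 1) := by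
    intro n
    induction n using Nat.strong_induction_on with
    | _ n ihn =>
      intro y w hyn hwy
      by_cases hwyeq : w = y
      · subst hwyeq
        exact ⟨1, by rw [map_one, hQrefl], fun _ => rfl, fun h => absurd rfl h⟩
      · have hlwy : cs.length w.1 < cs.length y.1 := by
          rcases bruhat_eq_or_lt hwy with h | h
          · exact absurd (Subtype.ext h) hwyeq
          · exact h
        have h1 : ∀ y' : minReps cs J, ∃ p1 : Polynomial ℤ,
            y' ∈ S w y → (Polynomial.aeval K.q p1 = Q w y' ∧ (w = y' → p1 = 1) ∧
              (w ≠ y' → 2 * p1.natDegree ≤ cs.length y'.1 - cs.length w.1 - 1)) := by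
          intro y'
          by_cases h : y' ∈ S w y
          · obtain ⟨p1, hp1, hp2, hp3⟩ := ihn (cs.length y'.1)
              (by have := hSlt w y y' h; omega) y' w le_rfl (hSbru w y y' h)
            exact ⟨p1, fun _ => ⟨hp1, hp2, hp3⟩⟩
          · exact ⟨0, fun hc => absurd hc h⟩
        choose p1 hp1 using h1
        choose p2 hp2a hp2b hp2c using lemD y
        refine ⟨(-1 : Polynomial ℤ) ^ (cs.length y.1 - cs.length w.1 + 1) *
          ∑ y' ∈ S w y, (-1 : Polynomial ℤ) ^ (cs.length y'.1 - cs.length w.1) *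
            p1 y' * p2 y', ?_, fun h => absurd h hwyeq, ?_⟩
        · rw [map_mul, map_pow, map_neg, map_one, map_sum, hQdef, if_neg hwyeq]
          congr 1
          apply Finset.sum_congr rfl
          intro y' hy'
          rw [map_mul, map_mul, map_pow, map_neg, map_one, (hp1 y' hy').1, hp2a y']
        · intro _
          have hdeg : (∑ y' ∈ S w y, (-1 : Polynomial ℤ) ^ (cs.length y'.1 - cs.length w.1) *
              p1 y' * p2 y').natDegree ≤ (cs.length y.1 - cs.length w.1 - 1) / 2 := by
            apply Polynomial.natDegree_sum_le_of_forall_le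
            intro y' hy'
            by_cases hz2 : p2 y' = 0
            · rw [hz2, mul_zero, Polynomial.natDegree_zero]
              omega
            have hy'y : y' ≠ y := ((hSmem w y y').mp hy').1
            have hd2 := (hp2c y' hy'y).resolve_right hz2
            have hley' : cs.length y'.1 < cs.length y.1 := hSlt w y y' hy'
            have hwley' : cs.length w.1 ≤ cs.length y'.1 :=
              bruhat_length_le (hSbru w y y' hy')
            have hsgndeg : ((-1 : Polynomial ℤ) ^ (cs.length y'.1 - cs.length w.1)).natDegree
                = 0 := by
              rw [show (-1 : Polynomial ℤ) = Polynomial.C (-1) from by simp, ← map_pow,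
                Polynomial.natDegree_C]
            refine le_trans (Polynomial.natDegree_mul_le) ?_
            refine le_trans (Nat.add_le_add_right Polynomial.natDegree_mul_le _) ?_
            rw [hsgndeg]
            by_cases hwy' : w = y'
            · have hp1one : p1 y' = 1 := (hp1 y' hy').2.1 hwy'
              rw [hp1one, Polynomial.natDegree_one]
              subst hwy'
              omega
            · have hd1 := (hp1 y' hy').2.2 hwy'
              have hlwy' : cs.length w.1 < cs.length y'.1 := by
                rcases bruhat_eq_or_lt (hSbru w y y' hy') with h | h
                · exact absurd (Subtype.ext h) hwy'
                · exact h
              omega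
          have hsgndeg2 : ((-1 : Polynomial ℤ) ^ (cs.length y.1 - cs.length w.1 + 1)).natDegree
              = 0 := by
            rw [show (-1 : Polynomial ℤ) = Polynomial.C (-1) from by simp, ← map_pow,
              Polynomial.natDegree_C]
          have hfinal : ((-1 : Polynomial ℤ) ^ (cs.length y.1 - cs.length w.1 + 1) *
              ∑ y' ∈ S w y, (-1 : Polynomial ℤ) ^ (cs.length y'.1 - cs.length w.1) *
                p1 y' * p2 y').natDegree ≤ (cs.length y.1 - cs.length w.1 - 1) / 2 := by
            refine le_trans Polynomial.natDegree_mul_le ?_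
            rw [hsgndeg2, zero_add]
            exact hdeg
          omega
  -- Conclusion.
  refine ⟨Q, hmain, ?_, hQrefl, ?_, ?_⟩
  · intro w y hwy
    obtain ⟨p, hp, -, -⟩ := hQpoly (cs.length y.1) y w le_rfl hwy
    exact ⟨p, hp⟩
  · intro w y hwy hwyne
    obtain ⟨p, hp, -, hdeg⟩ := hQpoly (cs.length y.1) y w le_rfl hwy
    exact ⟨p, hp, hdeg hwyne⟩
  · intro QJ' hQJ'
    have huniq : ∀ (n : ℕ) (y w : minReps cs J), cs.length y.1 ≤ n →
        bruhatLE cs w.1 y.1 → QJ' w y = Q w y := by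
      intro n
      induction n using Nat.strong_induction_on with
      | _ n ihn =>
        intro y w hyn hwy
        have e1 := hQJ' w y hwy
        have e2 := hmain w y hwy
        rw [hred QJ' w y hwy] at e1
        rw [hred Q w y hwy] at e2
        have hsum_eq : (∑ y' ∈ S w y,
            (-1 : R) ^ (cs.length y'.1 - cs.length w.1) * QJ' w y' * b.repr (CJ y) y')
            = ∑ y' ∈ S w y,
              (-1 : R) ^ (cs.length y'.1 - cs.length w.1) * Q w y' * b.repr (CJ y) y' := by
          apply Finset.sum_congr rfl
          intro y' hy'
          rw [ihn (cs.length y'.1) (by have := hSlt w y y' hy'; omega) y' w le_rfl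
            (hSbru w y y' hy')]
        rw [hsum_eq] at e1
        have e3 : (-1 : R) ^ (cs.length y.1 - cs.length w.1) * QJ' w y
            = (-1 : R) ^ (cs.length y.1 - cs.length w.1) * Q w y := by
          have := e1.trans e2.symm
          exact add_right_cancel this
        have hsq : (-1 : R) ^ (cs.length y.1 - cs.length w.1) *
            (-1 : R) ^ (cs.length y.1 - cs.length w.1) = 1 := by
          rw [← pow_add, ← two_mul, pow_mul, neg_one_sq, one_pow]
        have e4 := congrArg (fun t => (-1 : R) ^ (cs.length y.1 - cs.length w.1) * t) e3
        rwa [← mul_assoc, ← mul_assoc, hsq, one_mul, one_mul] at e4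
    intro w y hwy
    exact huniq (cs.length y.1) y w le_rfl hwy

end KLPaper
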